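/- Let d ≥ 1, g ≥ 0, and let (v, p) be a smooth solution of the incompressible Euler equations with gravity g on an open set U ⊆ ℝ_t × ℝᵈ_x. Then on U one has the identity Δ(D_t p) = Σ_j (Δ v_j) ∂_j p + 4 Σ_{i,j} ∂_i ∂_j p · ∂_i v_j + 2 Σ_{i,j,k} ∂_i v_j ∂_j v_k ∂_k v_i, which can equivalently be written in divergence form as Δ(D_t p) = Σ_i ∂_i( Σ_j ∂_i v_j ∂_j p ) + 3 Σ_i ∂_i( Σ_j ∂_j p ∂_j v_i ) + 2 Σ_{i,j,k} ∂_i v_j ∂_j v_k ∂_k v_i. -/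

import Mathlib

noncomputable section

/-- Time-space: `ℝ_t × ℝᵈ_x`. -/
abbrev Spc (d : ℕ) := ℝ × (Fin d → ℝ)

/-- The spatial partial derivative `∂ᵢ F`. -/
def pd {d : ℕ} (i : Fin d) (F : Spc d → ℝ) (z : Spc d) : ℝ :=
  fderiv ℝ F z (0, Pi.single i 1)

/-- The material derivative `D_t F = ∂_t F + v·∇F` associated with the velocity field `v`. -/
def mdt {d : ℕ} (v : Spc d → Fin d → ℝ) (F : Spc d → ℝ) (z : Spc d) : ℝ :=
  fderiv ℝ F z (1, 0) + ∑ i : Fin d, v z i * pd i F z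

/-- The spatial Laplacian `Δ F = Σᵢ ∂ᵢ∂ᵢ F`. -/
def lap {d : ℕ} (F : Spc d → ℝ) (z : Spc d) : ℝ := ∑ i : Fin d, pd i (pd i F) z

/-- `(v, p)` solves the incompressible Euler equations with gravity `g` on `U`:
`∂_t v + (v·∇)v = −∇p − g e_d` and `∇·v = 0` on `U`, `e_d` the last standard basis vector. -/
def IsEulerOn {d : ℕ} (g : ℝ) (U : Set (Spc d)) (v : Spc d → Fin d → ℝ) (p : Spc d → ℝ) :
    Prop :=
  (∀ z ∈ U, ∀ j : Fin d,
      mdt v (fun w => v w j) z = -pd j p z - (if (j : ℕ) = d - 1 then g else 0)) ∧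
    (∀ z ∈ U, ∑ i : Fin d, pd i (fun w => v w i) z = 0)

/-! ### Auxiliary calculus toolbox -/

/-- directional derivative -/
def pdd {d : ℕ} (w : Spc d) (F : Spc d → ℝ) (z : Spc d) : ℝ := fderiv ℝ F z w

def sdir {d : ℕ} (i : Fin d) : Spc d := (0, Pi.single i 1)
def tdir (d : ℕ) : Spc d := (1, 0)

lemma pd_eq_pdd {d : ℕ} (i : Fin d) (F : Spc d → ℝ) : pd i F = pdd (sdir i) F := rfl

variable {d : ℕ} {U : Set (Spc d)}

lemma cdAt (hU : IsOpen U) {F : Spc d → ℝ} (hF : ContDiffOn ℝ (⊤ : ℕ∞) F U) {z : Spc d}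
    (hz : z ∈ U) : ContDiffAt ℝ (⊤ : ℕ∞) F z := hF.contDiffAt (hU.mem_nhds hz)

lemma dAt (hU : IsOpen U) {F : Spc d → ℝ} (hF : ContDiffOn ℝ (⊤ : ℕ∞) F U) {z : Spc d}
    (hz : z ∈ U) : DifferentiableAt ℝ F z :=
  (cdAt hU hF hz).differentiableAt (by simp)

lemma contDiffOn_pdd (hU : IsOpen U) {F : Spc d → ℝ} (hF : ContDiffOn ℝ (⊤ : ℕ∞) F U)
    (w : Spc d) : ContDiffOn ℝ (⊤ : ℕ∞) (pdd w F) U :=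
  (hF.fderiv_of_isOpen hU (by norm_num)).clm_apply contDiffOn_const

lemma contDiffOn_pd (hU : IsOpen U) {F : Spc d → ℝ} (hF : ContDiffOn ℝ (⊤ : ℕ∞) F U)
    (i : Fin d) : ContDiffOn ℝ (⊤ : ℕ∞) (pd i F) U := contDiffOn_pdd hU hF _

lemma pdd_add {F G : Spc d → ℝ} {z : Spc d} (hF : DifferentiableAt ℝ F z)
    (hG : DifferentiableAt ℝ G z) (w : Spc d) :
    pdd w (fun x => F x + G x) z = pdd w F z + pdd w G z := by
  simp [pdd, fderiv_fun_add hF hG]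

lemma pdd_mul {F G : Spc d → ℝ} {z : Spc d} (hF : DifferentiableAt ℝ F z)
    (hG : DifferentiableAt ℝ G z) (w : Spc d) :
    pdd w (fun x => F x * G x) z = pdd w F z * G z + F z * pdd w G z := by
  simp [pdd, fderiv_fun_mul hF hG]; ring

lemma pdd_sum {ι : Type*} (s : Finset ι) {F : ι → Spc d → ℝ} {z : Spc d}
    (hF : ∀ i ∈ s, DifferentiableAt ℝ (F i) z) (w : Spc d) :
    pdd w (fun x => ∑ i ∈ s, F i x) z = ∑ i ∈ s, pdd w (F i) z := by
  simp [pdd, fderiv_fun_sum hF]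

lemma pdd_const (c : ℝ) (w : Spc d) (z : Spc d) : pdd w (fun _ => c) z = 0 := by
  simp [pdd]

lemma pdd_congr_eq {F G : Spc d → ℝ} {z : Spc d} (h : F =ᶠ[nhds z] G) (w : Spc d) :
    pdd w F z = pdd w G z := by
  simp [pdd, h.fderiv_eq]

lemma pdd_neg {F : Spc d → ℝ} (w : Spc d) (z : Spc d) :
    pdd w (fun x => -F x) z = -pdd w F z := by
  simp [pdd, fderiv_neg]

lemma pdd_neg_sub_const {F : Spc d → ℝ} (c : ℝ) (w : Spc d) (z : Spc d) :
    pdd w (fun x => -F x - c) z = -pdd w F z := by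
  rw [pdd, fderiv_sub_const, fderiv_fun_neg]
  simp [pdd]

lemma pdd_comm (hU : IsOpen U) {F : Spc d → ℝ} {z : Spc d} (hz : z ∈ U)
    (hF : ContDiffOn ℝ (⊤ : ℕ∞) F U) (a b : Spc d) :
    pdd a (pdd b F) z = pdd b (pdd a F) z := by
  have hc : ContDiffAt ℝ (⊤ : ℕ∞) F z := cdAt hU hF hz
  have hd : DifferentiableAt ℝ (fderiv ℝ F) z :=
    (hc.fderiv_right (m := (⊤:ℕ∞)) (by simp)).differentiableAt (by simp)
  have key : ∀ u w : Spc d, pdd u (pdd w F) z = fderiv ℝ (fderiv ℝ F) z u w := by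
    intro u w
    have h : pdd w F = fun y => (fderiv ℝ F y) ((fun _ => w) y) := rfl
    rw [pdd, h, fderiv_clm_apply hd (differentiableAt_const w)]
    simp
  rw [key, key]
  exact hc.isSymmSndFDerivAt (by rw [minSmoothness_of_isRCLikeNormedField]; exact WithTop.coe_le_coe.2 (le_top : (2:ℕ∞) ≤ ⊤)) a b

lemma pd_comm (hU : IsOpen U) {F : Spc d → ℝ} {z : Spc d} (hz : z ∈ U)
    (hF : ContDiffOn ℝ (⊤ : ℕ∞) F U) (i j : Fin d) :
    pd i (pd j F) z = pd j (pd i F) z := pdd_comm hU hz hF _ _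

lemma pd_t_comm (hU : IsOpen U) {F : Spc d → ℝ} {z : Spc d} (hz : z ∈ U)
    (hF : ContDiffOn ℝ (⊤ : ℕ∞) F U) (i : Fin d) :
    pd i (pdd (tdir d) F) z = pdd (tdir d) (pd i F) z := pdd_comm hU hz hF _ _

variable {v : Spc d → Fin d → ℝ} {p : Spc d → ℝ}

lemma smoothV (hv : ContDiffOn ℝ (⊤ : ℕ∞) v U) (j : Fin d) :
    ContDiffOn ℝ (⊤ : ℕ∞) (fun y => v y j) U := contDiffOn_pi.1 hv j

lemma mdt_eq (v : Spc d → Fin d → ℝ) (F : Spc d → ℝ) :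
    mdt v F = fun x => pdd (tdir d) F x + ∑ i : Fin d, v x i * pd i F x := rfl

lemma pdd_mdt (hU : IsOpen U) (hv : ContDiffOn ℝ (⊤ : ℕ∞) v U) {F : Spc d → ℝ}
    (hF : ContDiffOn ℝ (⊤ : ℕ∞) F U) {z : Spc d} (hz : z ∈ U) (w : Spc d) :
    pdd w (mdt v F) z = pdd w (pdd (tdir d) F) z +
      ∑ i : Fin d, (pdd w (fun y => v y i) z * pd i F z + v z i * pdd w (pd i F) z) := by
  have h1 : DifferentiableAt ℝ (pdd (tdir d) F) z := dAt hU (contDiffOn_pdd hU hF _) hz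
  have h2 : ∀ i : Fin d, DifferentiableAt ℝ (fun x => v x i * pd i F x) z := fun i =>
    (dAt hU (smoothV hv i) hz).mul (dAt hU (contDiffOn_pd hU hF i) hz)
  have h3 : DifferentiableAt ℝ (fun x => ∑ i : Fin d, v x i * pd i F x) z :=
    DifferentiableAt.fun_sum (fun i _ => h2 i)
  calc pdd w (mdt v F) z
      = pdd w (fun x => pdd (tdir d) F x + ∑ i : Fin d, v x i * pd i F x) z := rfl
    _ = pdd w (pdd (tdir d) F) z + pdd w (fun x => ∑ i : Fin d, v x i * pd i F x) z :=
        pdd_add h1 h3 w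
    _ = pdd w (pdd (tdir d) F) z + ∑ i : Fin d, pdd w (fun x => v x i * pd i F x) z := by
        rw [pdd_sum _ (fun i _ => h2 i) w]
    _ = pdd w (pdd (tdir d) F) z +
        ∑ i : Fin d, (pdd w (fun y => v y i) z * pd i F z + v z i * pdd w (pd i F) z) := by
        refine congrArg _ (Finset.sum_congr rfl fun i _ => ?_)
        exact pdd_mul (dAt hU (smoothV hv i) hz) (dAt hU (contDiffOn_pd hU hF i) hz) w

lemma div_deriv (hU : IsOpen U) (hv : ContDiffOn ℝ (⊤ : ℕ∞) v U)
    (hdiv : ∀ z ∈ U, ∑ i : Fin d, pd i (fun y => v y i) z = 0) :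
    ∀ z ∈ U, ∀ w : Spc d, ∑ i : Fin d, pdd w (pd i (fun y => v y i)) z = 0 := by
  intro z hz w
  have h1 : (fun x => ∑ i : Fin d, pd i (fun y => v y i) x) =ᶠ[nhds z] (fun _ => (0:ℝ)) := by
    filter_upwards [hU.mem_nhds hz] with x hx using hdiv x hx
  have h2 := pdd_congr_eq h1 w
  rw [pdd_const] at h2
  rw [← h2]
  exact (pdd_sum Finset.univ
    (fun i _ => dAt hU (contDiffOn_pd hU (smoothV hv i) i) hz) w).symm

lemma euler_deriv {g : ℝ} (hU : IsOpen U) (hv : ContDiffOn ℝ (⊤ : ℕ∞) v U)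
    (hp : ContDiffOn ℝ (⊤ : ℕ∞) p U)
    (he : ∀ z ∈ U, ∀ j : Fin d,
      mdt v (fun y => v y j) z = -pd j p z - (if (j : ℕ) = d - 1 then g else 0)) :
    ∀ z ∈ U, ∀ (j : Fin d) (w : Spc d),
      pdd w (pdd (tdir d) (fun y => v y j)) z +
        ∑ i : Fin d, (pdd w (fun y => v y i) z * pd i (fun y => v y j) z +
          v z i * pdd w (pd i (fun y => v y j)) z) = -(pdd w (pd j p) z) := by
  intro z hz j w
  have hfg : (mdt v (fun y => v y j)) =ᶠ[nhds z]
      (fun x => -pd j p x - (if (j : ℕ) = d - 1 then g else 0)) := by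
    filter_upwards [hU.mem_nhds hz] with x hx using he x hx j
  have h2 := pdd_congr_eq hfg w
  rw [pdd_neg_sub_const, pdd_mdt hU hv (smoothV hv j) hz w] at h2
  exact h2

lemma lap_eq {g : ℝ} (hU : IsOpen U) (hv : ContDiffOn ℝ (⊤ : ℕ∞) v U)
    (hp : ContDiffOn ℝ (⊤ : ℕ∞) p U)
    (he : ∀ z ∈ U, ∀ j : Fin d,
      mdt v (fun y => v y j) z = -pd j p z - (if (j : ℕ) = d - 1 then g else 0))
    (hdiv : ∀ z ∈ U, ∑ i : Fin d, pd i (fun y => v y i) z = 0) :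
    ∀ z ∈ U, lap p z =
      -∑ i : Fin d, ∑ j : Fin d, pd i (fun y => v y j) z * pd j (fun y => v y i) z := by
  intro z hz
  have hB : ∀ j : Fin d, pd j (pdd (tdir d) (fun y => v y j)) z +
      ∑ i : Fin d, (pd j (fun y => v y i) z * pd i (fun y => v y j) z +
        v z i * pd j (pd i (fun y => v y j)) z) = -(pd j (pd j p) z) :=
    fun j => euler_deriv hU hv hp he z hz j (sdir j)
  have hsum : ∑ j : Fin d, (pd j (pdd (tdir d) (fun y => v y j)) z +
      ∑ i : Fin d, (pd j (fun y => v y i) z * pd i (fun y => v y j) z +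
        v z i * pd j (pd i (fun y => v y j)) z)) = ∑ j : Fin d, -(pd j (pd j p) z) :=
    Finset.sum_congr rfl (fun j _ => hB j)
  have t1 : ∑ j : Fin d, pd j (pdd (tdir d) (fun y => v y j)) z = 0 := by
    calc ∑ j : Fin d, pd j (pdd (tdir d) (fun y => v y j)) z
        = ∑ j : Fin d, pdd (tdir d) (pd j (fun y => v y j)) z :=
          Finset.sum_congr rfl (fun j _ => pd_t_comm hU hz (smoothV hv j) j)
      _ = 0 := div_deriv hU hv hdiv z hz (tdir d)
  have t2 : ∑ j : Fin d, ∑ i : Fin d, v z i * pd j (pd i (fun y => v y j)) z = 0 := by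
    calc ∑ j : Fin d, ∑ i : Fin d, v z i * pd j (pd i (fun y => v y j)) z
        = ∑ j : Fin d, ∑ i : Fin d, v z i * pd i (pd j (fun y => v y j)) z :=
          Finset.sum_congr rfl (fun j _ => Finset.sum_congr rfl (fun i _ => by
            rw [pd_comm hU hz (smoothV hv j) j i]))
      _ = ∑ i : Fin d, ∑ j : Fin d, v z i * pd i (pd j (fun y => v y j)) z := Finset.sum_comm
      _ = ∑ i : Fin d, v z i * ∑ j : Fin d, pd i (pd j (fun y => v y j)) z := by
          simp [Finset.mul_sum]
      _ = 0 := by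
          refine Finset.sum_eq_zero (fun i _ => ?_)
          rw [show (∑ j : Fin d, pd i (pd j (fun y => v y j)) z) = 0 from
            div_deriv hU hv hdiv z hz (sdir i), mul_zero]
  have t3 : ∑ j : Fin d, ∑ i : Fin d, pd j (fun y => v y i) z * pd i (fun y => v y j) z
      = ∑ i : Fin d, ∑ j : Fin d, pd i (fun y => v y j) z * pd j (fun y => v y i) z := by
    rw [Finset.sum_comm]
  rw [Finset.sum_add_distrib, t1, zero_add] at hsum
  have hsplit : ∑ j : Fin d, ∑ i : Fin d, (pd j (fun y => v y i) z * pd i (fun y => v y j) z +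
      v z i * pd j (pd i (fun y => v y j)) z)
      = ∑ i : Fin d, ∑ j : Fin d, pd i (fun y => v y j) z * pd j (fun y => v y i) z := by
    rw [show (∑ j : Fin d, ∑ i : Fin d, (pd j (fun y => v y i) z * pd i (fun y => v y j) z +
        v z i * pd j (pd i (fun y => v y j)) z))
        = (∑ j : Fin d, ∑ i : Fin d, pd j (fun y => v y i) z * pd i (fun y => v y j) z) +
          ∑ j : Fin d, ∑ i : Fin d, v z i * pd j (pd i (fun y => v y j)) z from by
      rw [← Finset.sum_add_distrib]
      exact Finset.sum_congr rfl fun j _ => Finset.sum_add_distrib]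
    rw [t2, add_zero, t3]
  rw [hsplit] at hsum
  have hlp : lap p z = ∑ j : Fin d, pd j (pd j p) z := rfl
  have h4 : ∑ j : Fin d, -(pd j (pd j p) z) = -∑ j : Fin d, pd j (pd j p) z :=
    Finset.sum_neg_distrib _
  rw [h4] at hsum
  rw [hlp]
  linarith [hsum]

def Sfun {d : ℕ} (v : Spc d → Fin d → ℝ) : Spc d → ℝ := fun x =>
  ∑ i : Fin d, ∑ j : Fin d, pd i (fun y => v y j) x * pd j (fun y => v y i) x

lemma sum_comm3 {f : Fin d → Fin d → Fin d → ℝ} :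
    (∑ k : Fin d, ∑ i : Fin d, ∑ j : Fin d, f k i j)
      = ∑ i : Fin d, ∑ j : Fin d, ∑ k : Fin d, f k i j := by
  rw [Finset.sum_comm]
  exact Finset.sum_congr rfl fun i _ => Finset.sum_comm

lemma pdd_Sfun (hU : IsOpen U) (hv : ContDiffOn ℝ (⊤ : ℕ∞) v U) {z : Spc d} (hz : z ∈ U)
    (w : Spc d) :
    pdd w (Sfun v) z = 2 * ∑ i : Fin d, ∑ j : Fin d,
      pd i (fun y => v y j) z * pdd w (pd j (fun y => v y i)) z := by
  have hdvij : ∀ i j : Fin d, ContDiffOn ℝ (⊤:ℕ∞) (pd i (fun y => v y j)) U := fun i j =>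
    contDiffOn_pd hU (smoothV hv j) i
  have hprodD : ∀ i j : Fin d,
      DifferentiableAt ℝ (fun x => pd i (fun y => v y j) x * pd j (fun y => v y i) x) z :=
    fun i j => (dAt hU (hdvij i j) hz).mul (dAt hU (hdvij j i) hz)
  have h1 : pdd w (Sfun v) z = ∑ i : Fin d,
      pdd w (fun x => ∑ j : Fin d, pd i (fun y => v y j) x * pd j (fun y => v y i) x) z :=
    pdd_sum _ (fun i _ => DifferentiableAt.fun_sum fun j _ => hprodD i j) w
  have h2 : ∀ i : Fin d,
      pdd w (fun x => ∑ j : Fin d, pd i (fun y => v y j) x * pd j (fun y => v y i) x) z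
      = ∑ j : Fin d, (pdd w (pd i (fun y => v y j)) z * pd j (fun y => v y i) z +
          pd i (fun y => v y j) z * pdd w (pd j (fun y => v y i)) z) := by
    intro i
    rw [pdd_sum _ (fun j _ => hprodD i j) w]
    exact Finset.sum_congr rfl fun j _ =>
      pdd_mul (dAt hU (hdvij i j) hz) (dAt hU (hdvij j i) hz) w
  have h3 : pdd w (Sfun v) z = (∑ i : Fin d, ∑ j : Fin d,
        pdd w (pd i (fun y => v y j)) z * pd j (fun y => v y i) z) +
      ∑ i : Fin d, ∑ j : Fin d,
        pd i (fun y => v y j) z * pdd w (pd j (fun y => v y i)) z := by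
    rw [h1, Finset.sum_congr rfl fun i _ => h2 i, ← Finset.sum_add_distrib]
    exact Finset.sum_congr rfl fun i _ => Finset.sum_add_distrib
  have hAB : (∑ i : Fin d, ∑ j : Fin d,
        pdd w (pd i (fun y => v y j)) z * pd j (fun y => v y i) z)
      = ∑ i : Fin d, ∑ j : Fin d,
        pd i (fun y => v y j) z * pdd w (pd j (fun y => v y i)) z := by
    rw [Finset.sum_comm]
    exact Finset.sum_congr rfl fun i _ => Finset.sum_congr rfl fun j _ => mul_comm _ _
  rw [h3, hAB]; ring

lemma mdt_lap {g : ℝ} (hU : IsOpen U) (hv : ContDiffOn ℝ (⊤ : ℕ∞) v U)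
    (hp : ContDiffOn ℝ (⊤ : ℕ∞) p U)
    (he : ∀ z ∈ U, ∀ j : Fin d,
      mdt v (fun y => v y j) z = -pd j p z - (if (j : ℕ) = d - 1 then g else 0))
    (hdiv : ∀ z ∈ U, ∑ i : Fin d, pd i (fun y => v y i) z = 0) :
    ∀ z ∈ U, mdt v (lap p) z =
      2 * (∑ i : Fin d, ∑ j : Fin d, pd i (pd j p) z * pd i (fun y => v y j) z) +
      2 * (∑ i : Fin d, ∑ j : Fin d, ∑ k : Fin d,
        pd i (fun y => v y j) z * pd j (fun y => v y k) z * pd k (fun y => v y i) z) := by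
  intro z hz
  have hlapS : (lap p) =ᶠ[nhds z] (fun x => -Sfun v x) := by
    filter_upwards [hU.mem_nhds hz] with x hx using (lap_eq hU hv hp he hdiv x hx)
  have hpdlap : ∀ w : Spc d, pdd w (lap p) z = -(pdd w (Sfun v) z) := fun w => by
    rw [pdd_congr_eq hlapS w, pdd_neg]
  -- the bracket identity
  have hbr : ∀ i j : Fin d,
      pdd (tdir d) (pd j (fun y => v y i)) z +
        ∑ k : Fin d, v z k * pd k (pd j (fun y => v y i)) z
      = -(pd j (pd i p) z) -
        ∑ k : Fin d, pd j (fun y => v y k) z * pd k (fun y => v y i) z := by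
    intro i j
    have hE : pd j (pdd (tdir d) (fun y => v y i)) z +
        ∑ k : Fin d, (pd j (fun y => v y k) z * pd k (fun y => v y i) z +
          v z k * pd j (pd k (fun y => v y i)) z) = -(pd j (pd i p) z) :=
      euler_deriv hU hv hp he z hz i (sdir j)
    have c1 : pdd (tdir d) (pd j (fun y => v y i)) z
        = pd j (pdd (tdir d) (fun y => v y i)) z :=
      (pd_t_comm hU hz (smoothV hv i) j).symm
    have c2 : (∑ k : Fin d, v z k * pd k (pd j (fun y => v y i)) z)
        = ∑ k : Fin d, v z k * pd j (pd k (fun y => v y i)) z :=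
      Finset.sum_congr rfl fun k _ => by rw [pd_comm hU hz (smoothV hv i) k j]
    rw [c1, c2]
    have hsplit : (∑ k : Fin d, (pd j (fun y => v y k) z * pd k (fun y => v y i) z +
        v z k * pd j (pd k (fun y => v y i)) z))
        = (∑ k : Fin d, pd j (fun y => v y k) z * pd k (fun y => v y i) z) +
          ∑ k : Fin d, v z k * pd j (pd k (fun y => v y i)) z := Finset.sum_add_distrib
    rw [hsplit] at hE
    linarith [hE]
  -- expand mdt
  have hstart : mdt v (lap p) z = -(pdd (tdir d) (Sfun v) z) +
      ∑ k : Fin d, v z k * -(pdd (sdir k) (Sfun v) z) := by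
    have : mdt v (lap p) z = pdd (tdir d) (lap p) z +
        ∑ k : Fin d, v z k * pd k (lap p) z := rfl
    rw [this, hpdlap (tdir d)]
    exact congrArg _ (Finset.sum_congr rfl fun k _ => by rw [show pd k (lap p) z = pdd (sdir k) (lap p) z from rfl, hpdlap (sdir k)])
  rw [hstart, pdd_Sfun hU hv hz (tdir d)]
  have hk : ∀ k : Fin d, v z k * -(pdd (sdir k) (Sfun v) z)
      = ∑ i : Fin d, ∑ j : Fin d, -(2 * (pd i (fun y => v y j) z *
          (v z k * pd k (pd j (fun y => v y i)) z))) := by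
    intro k
    rw [pdd_Sfun hU hv hz (sdir k)]
    rw [show (∑ i : Fin d, ∑ j : Fin d,
        pd i (fun y => v y j) z * pdd (sdir k) (pd j (fun y => v y i)) z)
        = ∑ i : Fin d, ∑ j : Fin d,
          pd i (fun y => v y j) z * pd k (pd j (fun y => v y i)) z from rfl]
    simp only [Finset.mul_sum, mul_neg, neg_mul]
    simp only [← Finset.sum_neg_distrib]
    exact Finset.sum_congr rfl fun i _ => Finset.sum_congr rfl fun j _ => by ring
  rw [Finset.sum_congr rfl fun k _ => hk k, sum_comm3]
  -- now combine the k-sum inside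
  have hcollect : (∑ i : Fin d, ∑ j : Fin d, ∑ k : Fin d,
      -(2 * (pd i (fun y => v y j) z * (v z k * pd k (pd j (fun y => v y i)) z))))
      = ∑ i : Fin d, ∑ j : Fin d,
        -(2 * (pd i (fun y => v y j) z *
          (∑ k : Fin d, v z k * pd k (pd j (fun y => v y i)) z))) := by
    refine Finset.sum_congr rfl fun i _ => Finset.sum_congr rfl fun j _ => ?_
    simp only [Finset.mul_sum, Finset.sum_neg_distrib]
  rw [hcollect]
  -- per (i,j) combine with the t-term and apply the bracket
  have hfinal : ∀ i j : Fin d,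
      -(2 * (pd i (fun y => v y j) z * pdd (tdir d) (pd j (fun y => v y i)) z)) +
      -(2 * (pd i (fun y => v y j) z *
          (∑ k : Fin d, v z k * pd k (pd j (fun y => v y i)) z)))
      = 2 * (pd i (pd j p) z * pd i (fun y => v y j) z) +
        2 * (∑ k : Fin d, pd i (fun y => v y j) z * pd j (fun y => v y k) z *
          pd k (fun y => v y i) z) := by
    intro i j
    have hb := hbr i j
    have hsym : pd j (pd i p) z = pd i (pd j p) z := pd_comm hU hz hp j i
    rw [hsym] at hb
    have htr : pd i (fun y => v y j) z *
        (∑ k : Fin d, pd j (fun y => v y k) z * pd k (fun y => v y i) z)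
        = ∑ k : Fin d, pd i (fun y => v y j) z * pd j (fun y => v y k) z *
            pd k (fun y => v y i) z := by
      rw [Finset.mul_sum]
      exact Finset.sum_congr rfl fun k _ => (mul_assoc _ _ _).symm
    have h5 : pdd (tdir d) (pd j (fun y => v y i)) z
        = (-(pd i (pd j p) z) -
            ∑ k : Fin d, pd j (fun y => v y k) z * pd k (fun y => v y i) z) -
          ∑ k : Fin d, v z k * pd k (pd j (fun y => v y i)) z := by linarith [hb]
    rw [h5, ← htr]
    ring
  -- assemble
  have e1 : -(2 * ∑ i : Fin d, ∑ j : Fin d,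
      pd i (fun y => v y j) z * pdd (tdir d) (pd j (fun y => v y i)) z)
      = ∑ i : Fin d, ∑ j : Fin d,
        -(2 * (pd i (fun y => v y j) z * pdd (tdir d) (pd j (fun y => v y i)) z)) := by
    simp only [Finset.mul_sum]
    simp only [← Finset.sum_neg_distrib]
  rw [e1]
  simp only [← Finset.sum_add_distrib]
  rw [Finset.sum_congr rfl fun i (_ : i ∈ Finset.univ) =>
    Finset.sum_congr rfl fun j (_ : j ∈ Finset.univ) => hfinal i j]
  simp only [Finset.mul_sum]
  simp only [← Finset.sum_add_distrib]

lemma lap_mdt (hU : IsOpen U) (hv : ContDiffOn ℝ (⊤ : ℕ∞) v U)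
    (hp : ContDiffOn ℝ (⊤ : ℕ∞) p U) :
    ∀ z ∈ U, lap (mdt v p) z = mdt v (lap p) z +
      (∑ i : Fin d, lap (fun y => v y i) z * pd i p z) +
      ∑ k : Fin d, ∑ i : Fin d, 2 * (pd k (fun y => v y i) z * pd i (pd k p) z) := by
  intro z hz
  have hGk : ∀ k : Fin d, pd k (mdt v p) =ᶠ[nhds z]
      (fun x => pdd (tdir d) (pd k p) x + ∑ i : Fin d,
        (pd k (fun y => v y i) x * pd i p x + v x i * pd i (pd k p) x)) := by
    intro k
    filter_upwards [hU.mem_nhds hz] with x hx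
    have h1 : pd k (mdt v p) x = pdd (sdir k) (mdt v p) x := rfl
    rw [h1, pdd_mdt hU hv hp hx (sdir k)]
    have c1 : pdd (sdir k) (pdd (tdir d) p) x = pdd (tdir d) (pd k p) x :=
      pdd_comm hU hx hp (sdir k) (tdir d)
    have c2 : ∀ i : Fin d, pdd (sdir k) (pd i p) x = pd i (pd k p) x := fun i =>
      pdd_comm hU hx hp (sdir k) (sdir i)
    rw [c1]
    refine congrArg _ (Finset.sum_congr rfl fun i _ => ?_)
    rw [c2 i]
    rfl
  have hsm1 : ∀ k : Fin d, ContDiffOn ℝ (⊤:ℕ∞) (pdd (tdir d) (pd k p)) U := fun k =>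
    contDiffOn_pdd hU (contDiffOn_pd hU hp k) _
  have hsm2 : ∀ i j : Fin d, ContDiffOn ℝ (⊤:ℕ∞) (pd i (pd j p)) U := fun i j =>
    contDiffOn_pd hU (contDiffOn_pd hU hp j) i
  have hsmv : ∀ k i : Fin d, ContDiffOn ℝ (⊤:ℕ∞) (pd k (fun y => v y i)) U := fun k i =>
    contDiffOn_pd hU (smoothV hv i) k
  have hpdk2 : ∀ k : Fin d, pd k (pd k (mdt v p)) z
      = pdd (tdir d) (pd k (pd k p)) z + ∑ i : Fin d,
        (pd k (pd k (fun y => v y i)) z * pd i p z +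
          2 * (pd k (fun y => v y i) z * pd i (pd k p) z) +
          v z i * pd i (pd k (pd k p)) z) := by
    intro k
    have e0 : pd k (pd k (mdt v p)) z
        = pdd (sdir k) (fun x => pdd (tdir d) (pd k p) x + ∑ i : Fin d,
            (pd k (fun y => v y i) x * pd i p x + v x i * pd i (pd k p) x)) z :=
      pdd_congr_eq (hGk k) (sdir k)
    have hdA : DifferentiableAt ℝ (pdd (tdir d) (pd k p)) z := dAt hU (hsm1 k) hz
    have hdB1 : ∀ i : Fin d, DifferentiableAt ℝ
        (fun x => pd k (fun y => v y i) x * pd i p x) z := fun i =>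
      (dAt hU (hsmv k i) hz).mul (dAt hU (contDiffOn_pd hU hp i) hz)
    have hdB2 : ∀ i : Fin d, DifferentiableAt ℝ
        (fun x => v x i * pd i (pd k p) x) z := fun i =>
      (dAt hU (smoothV hv i) hz).mul (dAt hU (hsm2 i k) hz)
    have hdB : ∀ i : Fin d, DifferentiableAt ℝ
        (fun x => pd k (fun y => v y i) x * pd i p x + v x i * pd i (pd k p) x) z :=
      fun i => (hdB1 i).add (hdB2 i)
    rw [e0, pdd_add hdA (DifferentiableAt.fun_sum fun i _ => hdB i) (sdir k),
      pdd_sum _ (fun i _ => hdB i) (sdir k)]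
    have hterm : ∀ i : Fin d,
        pdd (sdir k) (fun x => pd k (fun y => v y i) x * pd i p x +
          v x i * pd i (pd k p) x) z
        = pd k (pd k (fun y => v y i)) z * pd i p z +
          2 * (pd k (fun y => v y i) z * pd i (pd k p) z) +
          v z i * pd i (pd k (pd k p)) z := by
      intro i
      rw [pdd_add (hdB1 i) (hdB2 i) (sdir k),
        pdd_mul (dAt hU (hsmv k i) hz) (dAt hU (contDiffOn_pd hU hp i) hz) (sdir k),
        pdd_mul (dAt hU (smoothV hv i) hz) (dAt hU (hsm2 i k) hz) (sdir k)]
      have s1 : pdd (sdir k) (pd i p) z = pd i (pd k p) z :=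
        pdd_comm hU hz hp (sdir k) (sdir i)
      have s2 : pdd (sdir k) (pd i (pd k p)) z = pd i (pd k (pd k p)) z :=
        pdd_comm hU hz (contDiffOn_pd hU hp k) (sdir k) (sdir i)
      rw [s1, s2,
        show pdd (sdir k) (pd k fun y => v y i) z = pd k (pd k fun y => v y i) z from rfl,
        show pdd (sdir k) (fun y => v y i) z = pd k (fun y => v y i) z from rfl]
      ring
    have hcomm0 : pdd (sdir k) (pdd (tdir d) (pd k p)) z
        = pdd (tdir d) (pd k (pd k p)) z :=
      pdd_comm hU hz (contDiffOn_pd hU hp k) (sdir k) (tdir d)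
    rw [hcomm0]
    exact congrArg _ (Finset.sum_congr rfl fun i _ => hterm i)
  have hstart : lap (mdt v p) z = ∑ k : Fin d, pd k (pd k (mdt v p)) z := rfl
  rw [hstart, Finset.sum_congr rfl fun k (_ : k ∈ Finset.univ) => hpdk2 k]
  simp only [Finset.sum_add_distrib]
  have t1 : ∑ k : Fin d, pdd (tdir d) (pd k (pd k p)) z = pdd (tdir d) (lap p) z :=
    (pdd_sum Finset.univ (fun k _ => dAt hU (hsm2 k k) hz) (tdir d)).symm
  have t2 : ∑ k : Fin d, ∑ i : Fin d, v z i * pd i (pd k (pd k p)) z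
      = ∑ i : Fin d, v z i * pd i (lap p) z := by
    rw [Finset.sum_comm]
    refine Finset.sum_congr rfl fun i _ => ?_
    rw [← Finset.mul_sum]
    congr 1
    exact (pdd_sum Finset.univ (fun k _ => dAt hU (hsm2 k k) hz) (sdir i)).symm
  have t3 : ∑ k : Fin d, ∑ i : Fin d, pd k (pd k (fun y => v y i)) z * pd i p z
      = ∑ i : Fin d, lap (fun y => v y i) z * pd i p z := by
    rw [Finset.sum_comm]
    refine Finset.sum_congr rfl fun i _ => ?_
    rw [← Finset.sum_mul]
    rfl
  rw [t1, t2, t3]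
  have hmdt : mdt v (lap p) z = pdd (tdir d) (lap p) z +
      ∑ i : Fin d, v z i * pd i (lap p) z := rfl
  rw [hmdt]
  ring


/-- For any smooth solution of the incompressible Euler equations with gravity
`g ≥ 0` on an open set `U ⊆ ℝ_t × ℝᵈ_x`, one has on `U` the identity
`Δ(D_t p) = Σ_j (Δ v_j) ∂_j p + 4 Σ_{i,j} ∂_i∂_j p ∂_i v_j + 2 Σ_{i,j,k} ∂_i v_j ∂_j v_k ∂_k v_i`,
equivalently (divergence form)
`Δ(D_t p) = Σ_i ∂_i(Σ_j ∂_i v_j ∂_j p) + 3 Σ_i ∂_i(Σ_j ∂_j p ∂_j v_i) + 2 Σ ∂_i v_j ∂_j v_k ∂_k v_i`. -/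
theorem statement8 (d : ℕ) (hd : 1 ≤ d) (g : ℝ) (hg : 0 ≤ g)
    (U : Set (Spc d)) (hU : IsOpen U)
    (v : Spc d → Fin d → ℝ) (p : Spc d → ℝ)
    (hv : ContDiffOn ℝ (⊤ : ℕ∞) v U) (hp : ContDiffOn ℝ (⊤ : ℕ∞) p U)
    (heuler : IsEulerOn g U v p) :
    ∀ z ∈ U,
      (lap (mdt v p) z =
          (∑ j : Fin d, lap (fun w => v w j) z * pd j p z) +
            4 * ∑ i : Fin d, ∑ j : Fin d, pd i (pd j p) z * pd i (fun w => v w j) z +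
            2 * ∑ i : Fin d, ∑ j : Fin d, ∑ k : Fin d,
              pd i (fun w => v w j) z * pd j (fun w => v w k) z * pd k (fun w => v w i) z) ∧
      (lap (mdt v p) z =
          (∑ i : Fin d, pd i (fun w => ∑ j : Fin d, pd i (fun w' => v w' j) w * pd j p w) z) +
            3 * ∑ i : Fin d, pd i (fun w => ∑ j : Fin d, pd j p w * pd j (fun w' => v w' i) w) z +
            2 * ∑ i : Fin d, ∑ j : Fin d, ∑ k : Fin d,
              pd i (fun w => v w j) z * pd j (fun w => v w k) z * pd k (fun w => v w i) z) := by
  intro z hz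
  obtain ⟨he, hdiv⟩ := heuler
  have hG1 : lap (mdt v p) z =
      (∑ j : Fin d, lap (fun w => v w j) z * pd j p z) +
        4 * ∑ i : Fin d, ∑ j : Fin d, pd i (pd j p) z * pd i (fun w => v w j) z +
        2 * ∑ i : Fin d, ∑ j : Fin d, ∑ k : Fin d,
          pd i (fun w => v w j) z * pd j (fun w => v w k) z * pd k (fun w => v w i) z := by
    have h1 := lap_mdt hU hv hp z hz
    have h2 := mdt_lap hU hv hp he hdiv z hz
    have hmix : (∑ k : Fin d, ∑ i : Fin d,
        2 * (pd k (fun y => v y i) z * pd i (pd k p) z))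
        = 2 * ∑ i : Fin d, ∑ j : Fin d, pd i (pd j p) z * pd i (fun w => v w j) z := by
      simp only [Finset.mul_sum]
      exact Finset.sum_congr rfl fun a _ => Finset.sum_congr rfl fun b _ => by
        rw [pd_comm hU hz hp b a]; ring
    rw [h1, h2, hmix]; ring
  refine ⟨hG1, ?_⟩
  rw [hG1]
  -- expand the two divergence-form sums
  have ha : ∀ i : Fin d,
      pd i (fun w => ∑ j : Fin d, pd i (fun w' => v w' j) w * pd j p w) z
      = ∑ j : Fin d, (pd i (pd i (fun w' => v w' j)) z * pd j p z +
          pd i (fun w' => v w' j) z * pd i (pd j p) z) := by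
    intro i
    have hD : ∀ j : Fin d,
        DifferentiableAt ℝ (fun w => pd i (fun w' => v w' j) w * pd j p w) z := fun j =>
      (dAt hU (contDiffOn_pd hU (smoothV hv j) i) hz).mul (dAt hU (contDiffOn_pd hU hp j) hz)
    have e := pdd_sum Finset.univ (fun j _ => hD j) (sdir i)
    rw [show pd i (fun w => ∑ j : Fin d, pd i (fun w' => v w' j) w * pd j p w) z
      = pdd (sdir i) (fun w => ∑ j : Fin d, pd i (fun w' => v w' j) w * pd j p w) z from rfl, e]
    refine Finset.sum_congr rfl fun j _ => ?_
    rw [pdd_mul (dAt hU (contDiffOn_pd hU (smoothV hv j) i) hz)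
      (dAt hU (contDiffOn_pd hU hp j) hz) (sdir i)]
    rfl
  have hb : ∀ i : Fin d,
      pd i (fun w => ∑ j : Fin d, pd j p w * pd j (fun w' => v w' i) w) z
      = ∑ j : Fin d, (pd i (pd j p) z * pd j (fun w' => v w' i) z +
          pd j p z * pd i (pd j (fun w' => v w' i)) z) := by
    intro i
    have hD : ∀ j : Fin d,
        DifferentiableAt ℝ (fun w => pd j p w * pd j (fun w' => v w' i) w) z := fun j =>
      (dAt hU (contDiffOn_pd hU hp j) hz).mul (dAt hU (contDiffOn_pd hU (smoothV hv i) j) hz)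
    have e := pdd_sum Finset.univ (fun j _ => hD j) (sdir i)
    rw [show pd i (fun w => ∑ j : Fin d, pd j p w * pd j (fun w' => v w' i) w) z
      = pdd (sdir i) (fun w => ∑ j : Fin d, pd j p w * pd j (fun w' => v w' i) w) z from rfl, e]
    refine Finset.sum_congr rfl fun j _ => ?_
    rw [pdd_mul (dAt hU (contDiffOn_pd hU hp j) hz)
      (dAt hU (contDiffOn_pd hU (smoothV hv i) j) hz) (sdir i)]
    rfl
  rw [Finset.sum_congr rfl fun i (_ : i ∈ Finset.univ) => ha i,
      Finset.sum_congr rfl fun i (_ : i ∈ Finset.univ) => hb i]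
  simp only [Finset.sum_add_distrib]
  -- piece 1 : Σ_iΣ_j ∂i∂i v_j ∂j p = Σ_j Δv_j ∂j p
  have t1 : ∑ i : Fin d, ∑ j : Fin d, pd i (pd i (fun w' => v w' j)) z * pd j p z
      = ∑ j : Fin d, lap (fun w => v w j) z * pd j p z := by
    rw [Finset.sum_comm]
    exact Finset.sum_congr rfl fun j _ => (Finset.sum_mul _ _ _).symm
  -- piece 2 : Σ_iΣ_j ∂j p ∂i∂j v_i = 0
  have t2 : ∑ i : Fin d, ∑ j : Fin d, pd j p z * pd i (pd j (fun w' => v w' i)) z = 0 := by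
    rw [Finset.sum_comm]
    refine Finset.sum_eq_zero fun j _ => ?_
    have : ∑ i : Fin d, pd j p z * pd i (pd j (fun w' => v w' i)) z
        = pd j p z * ∑ i : Fin d, pd j (pd i (fun w' => v w' i)) z := by
      rw [Finset.mul_sum]
      exact Finset.sum_congr rfl fun i _ => by
        rw [pd_comm hU hz (smoothV hv i) i j]
    have h0 : ∑ i : Fin d, pd j (pd i (fun w' => v w' i)) z = 0 :=
      div_deriv hU hv hdiv z hz (sdir j)
    rw [this, h0, mul_zero]
  -- piece 3 : reorient Σ_iΣ_j ∂i∂j p ∂j v_i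
  have t3 : ∑ i : Fin d, ∑ j : Fin d, pd i (pd j p) z * pd j (fun w' => v w' i) z
      = ∑ i : Fin d, ∑ j : Fin d, pd i (pd j p) z * pd i (fun w => v w j) z := by
    rw [Finset.sum_comm]
    exact Finset.sum_congr rfl fun i _ => Finset.sum_congr rfl fun j _ => by
      rw [pd_comm hU hz hp j i]
  -- piece 4 : reorient Σ_iΣ_j ∂i v_j ∂i∂j p
  have t4 : ∑ i : Fin d, ∑ j : Fin d, pd i (fun w' => v w' j) z * pd i (pd j p) z
      = ∑ i : Fin d, ∑ j : Fin d, pd i (pd j p) z * pd i (fun w => v w j) z :=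
    Finset.sum_congr rfl fun i _ => Finset.sum_congr rfl fun j _ => mul_comm _ _
  rw [t1, t2, t3, t4]
  ring
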